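/- For the diagonal matrix a = diag(e^{iλ₁}, e^{iλ₂}, e^{iλ₃}) with real λᵢ summing to zero, the identity 9·|P(a,a,āᵀ)|² = 1 + 8·cos(λ₂−λ₃)·cos(λ₃−λ₁)·cos(λ₁−λ₂) holds; in particular cos(λ₂−λ₃)·cos(λ₃−λ₁)·cos(λ₁−λ₂) ≥ −1/8. -/

import Mathlib

open Matrix

/-- The symmetric trilinear polarization of the determinant on 3×3 complex matrices. -/
noncomputable def Ppol (a b c : Matrix (Fin 3) (Fin 3) ℂ) : ℂ :=
  (6 : ℂ)⁻¹ * ((a + b + c).det - (a + b).det - (b + c).det - (a + c).det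
      + a.det + b.det + c.det)

set_option maxHeartbeats 800000 in
private theorem stmt9aux (l : Fin 3 → ℝ) (hsum : l 0 + l 1 + l 2 = 0)
    (a : Matrix (Fin 3) (Fin 3) ℂ)
    (ha : a = Matrix.diagonal fun i => Complex.exp (Complex.I * (l i : ℂ))) :
    9 * ‖(6 : ℂ)⁻¹ * ((a + a + aᴴ).det - (a + a).det - (a + aᴴ).det - (a + aᴴ).det
      + a.det + a.det + aᴴ.det)‖ ^ 2
      = 1 + 8 * (Real.cos (l 1 - l 2) * Real.cos (l 2 - l 0) * Real.cos (l 0 - l 1)) := by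
  have hc : ∀ t : ℝ, (starRingEnd ℂ) (Complex.exp (Complex.I * t))
      = (Complex.exp (Complex.I * t))⁻¹ := by
    intro t
    rw [← Complex.exp_conj, ← Complex.exp_neg]
    congr 1
    simp [Complex.conj_I]
  set x := Complex.exp (Complex.I * (l 0 : ℂ)) with hxd
  set y := Complex.exp (Complex.I * (l 1 : ℂ)) with hyd
  set z := Complex.exp (Complex.I * (l 2 : ℂ)) with hzd
  have hx : x ≠ 0 := Complex.exp_ne_zero _
  have hy : y ≠ 0 := Complex.exp_ne_zero _
  have hz : z ≠ 0 := Complex.exp_ne_zero _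
  have hcx : (starRingEnd ℂ) x = x⁻¹ := hc _
  have hcy : (starRingEnd ℂ) y = y⁻¹ := hc _
  have hcz : (starRingEnd ℂ) z = z⁻¹ := hc _
  have hprod : x * y * z = 1 := by
    rw [hxd, hyd, hzd, ← Complex.exp_add, ← Complex.exp_add,
      show Complex.I * (l 0 : ℂ) + Complex.I * (l 1 : ℂ) + Complex.I * (l 2 : ℂ)
        = Complex.I * (((l 0 + l 1 + l 2 : ℝ)) : ℂ) by push_cast; ring, hsum]
    simp
  have hxi : x⁻¹ = y * z := by field_simp; linear_combination (-1 : ℂ) * hprod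
  have hyi : y⁻¹ = z * x := by field_simp; linear_combination (-1 : ℂ) * hprod
  have hzi : z⁻¹ = x * y := by field_simp; linear_combination (-1 : ℂ) * hprod
  set P : ℂ := (6 : ℂ)⁻¹ * ((a + a + aᴴ).det - (a + a).det - (a + aᴴ).det - (a + aᴴ).det
      + a.det + a.det + aᴴ.det) with hPd
  have hP : P = (1/3) * (x^2*y^2 + y^2*z^2 + z^2*x^2) := by
    rw [hPd, ha]
    simp only [Matrix.det_fin_three, Matrix.conjTranspose_apply, Matrix.add_apply,
      Matrix.diagonal, Matrix.of_apply]
    simp [← hxd, ← hyd, ← hzd, hcx, hcy, hcz, hxi, hyi, hzi]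
    ring
  have hPc : (starRingEnd ℂ) P = (1/3) * (x^2 + y^2 + z^2) := by
    rw [hP]
    simp only [_root_.map_mul, _root_.map_add, map_div₀, _root_.map_one, map_ofNat,
      map_pow, hcx, hcy, hcz, hxi, hyi, hzi]
    linear_combination (1/3) * (x^2 + y^2 + z^2) * (x*y*z + 1) * hprod
  have hcos : ∀ u v : ℝ, (Real.cos (u - v) : ℂ)
      = (Complex.exp (Complex.I * u) * (Complex.exp (Complex.I * v))⁻¹
        + Complex.exp (Complex.I * v) * (Complex.exp (Complex.I * u))⁻¹) / 2 := by
    intro u v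
    rw [Complex.ofReal_cos, Complex.cos, ← Complex.exp_neg, ← Complex.exp_neg,
      ← Complex.exp_add, ← Complex.exp_add]
    push_cast
    ring_nf
  have hc1 : (Real.cos (l 1 - l 2) : ℂ) = x * (y^2 + z^2) / 2 := by
    rw [hcos, ← hyd, ← hzd, hyi, hzi]; ring
  have hc2 : (Real.cos (l 2 - l 0) : ℂ) = y * (z^2 + x^2) / 2 := by
    rw [hcos, ← hzd, ← hxd, hzi, hxi]; ring
  have hc3 : (Real.cos (l 0 - l 1) : ℂ) = z * (x^2 + y^2) / 2 := by
    rw [hcos, ← hxd, ← hyd, hxi, hyi]; ring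
  have key : (9 : ℂ) * (P * (starRingEnd ℂ) P)
      = 1 + 8 * ((Real.cos (l 1 - l 2) : ℂ) * (Real.cos (l 2 - l 0)) * (Real.cos (l 0 - l 1))) := by
    rw [hPc, hP, hc1, hc2, hc3]
    linear_combination (-(x^2*y^2 + y^2*z^2 + z^2*x^2) * (x^2 + y^2 + z^2)
      + (x*y*z)^2 + x*y*z + 1) * hprod
  have habs : ((9 * ‖P‖ ^ 2 : ℝ) : ℂ) = (9 : ℂ) * (P * (starRingEnd ℂ) P) := by
    rw [Complex.mul_conj, ← Complex.sq_norm]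
    push_cast
    ring
  have := habs.trans key
  exact_mod_cast this


/-- for `a = diag(e^{iλ₁}, e^{iλ₂}, e^{iλ₃})` with real `λᵢ` summing
to zero, `9·|P(a,a,āᵀ)|² = 1 + 8·cos(λ₂−λ₃)·cos(λ₃−λ₁)·cos(λ₁−λ₂)`; in particular
`cos(λ₂−λ₃)·cos(λ₃−λ₁)·cos(λ₁−λ₂) ≥ −1/8`. -/
theorem stmt9 (l : Fin 3 → ℝ) (hsum : l 0 + l 1 + l 2 = 0)
    (a : Matrix (Fin 3) (Fin 3) ℂ)
    (ha : a = Matrix.diagonal fun i => Complex.exp (Complex.I * (l i : ℂ))) :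
    9 * ‖Ppol a a aᴴ‖ ^ 2
      = 1 + 8 * (Real.cos (l 1 - l 2) * Real.cos (l 2 - l 0) * Real.cos (l 0 - l 1)) ∧
    -(1 / 8 : ℝ) ≤ Real.cos (l 1 - l 2) * Real.cos (l 2 - l 0) * Real.cos (l 0 - l 1) := by
  have hE : Ppol a a aᴴ = (6 : ℂ)⁻¹ * ((a + a + aᴴ).det - (a + a).det - (a + aᴴ).det
      - (a + aᴴ).det + a.det + a.det + aᴴ.det) := rfl
  have h := stmt9aux l hsum a ha
  rw [← hE] at h
  refine ⟨h, ?_⟩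
  nlinarith [sq_nonneg ‖Ppol a a aᴴ‖, h]
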